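/- Every element of G_BV is represented by a block; that is, for every g in G_BV there exist a block w_1 w_2 w_3^{−1} whose image in G_BV equals g. -/

import Mathlib

/-- Relator corresponding to the equation `u = v`. -/
def grel {α : Type*} (u v : FreeGroup α) : FreeGroup α := u * v⁻¹

/-- Generators of the braided Thompson group `BV`.  `s i` denotes `σ_{i+1}` and
`t i` denotes `τ_{i+1}` (so that exactly the generators `σ_i, τ_i` with `i ≥ 1` occur). -/
inductive BVGen : Type
  | x : ℕ → BVGen
  | s : ℕ → BVGen
  | t : ℕ → BVGen

namespace BVGen

/-- The free-group letter `x_i`. -/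
def X (i : ℕ) : FreeGroup BVGen := FreeGroup.of (BVGen.x i)

/-- The free-group letter `σ_i` (meaningful for `i ≥ 1`). -/
def S (i : ℕ) : FreeGroup BVGen := FreeGroup.of (BVGen.s (i - 1))

/-- The free-group letter `τ_i` (meaningful for `i ≥ 1`). -/
def T (i : ℕ) : FreeGroup BVGen := FreeGroup.of (BVGen.t (i - 1))

/-- The defining relations of the braided Thompson group `BV`. -/
def bvRels : Set (FreeGroup BVGen) :=
  { g |
    (∃ i j, i < j ∧ g = grel (X j * X i) (X i * X (j + 1))) ∨
    (∃ i j, 1 ≤ i ∧ i + 2 ≤ j ∧ g = grel (S i * S j) (S j * S i)) ∨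
    (∃ i, 1 ≤ i ∧ g = grel (S i * S (i + 1) * S i) (S (i + 1) * S i * S (i + 1))) ∨
    (∃ i j, 1 ≤ i ∧ i + 2 ≤ j ∧ g = grel (S i * T j) (T j * S i)) ∨
    (∃ i, 1 ≤ i ∧ g = grel (S i * T (i + 1) * S i) (T (i + 1) * S i * T (i + 1))) ∨
    (∃ i j, 1 ≤ i ∧ i < j ∧ g = grel (S i * X j) (X j * S i)) ∨
    (∃ i, 1 ≤ i ∧ g = grel (S i * X i) (X (i - 1) * S (i + 1) * S i)) ∨
    (∃ i j, j + 2 ≤ i ∧ g = grel (S i * X j) (X j * S (i + 1))) ∨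
    (∃ i, g = grel (S (i + 1) * X i) (X (i + 1) * S (i + 1) * S (i + 2))) ∨
    (∃ i j, j + 2 ≤ i ∧ g = grel (T i * X j) (X j * T (i + 1))) ∨
    (∃ i, 1 ≤ i ∧ g = grel (T i * X (i - 1)) (S i * T (i + 1))) ∨
    (∃ i, 1 ≤ i ∧ g = grel (T i) (X (i - 1) * T (i + 1) * S i)) }

end BVGen

/-- The braided Thompson group `BV`, given by its infinite presentation. -/
abbrev GBV : Type := PresentedGroup BVGen.bvRels

namespace GBV

/-- The generator `x_i` of `BV`. -/
def xg (i : ℕ) : GBV := PresentedGroup.of (BVGen.x i)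

/-- The generator `σ_i` of `BV` (meaningful for `i ≥ 1`). -/
def sg (i : ℕ) : GBV := PresentedGroup.of (BVGen.s (i - 1))

/-- The generator `τ_i` of `BV` (meaningful for `i ≥ 1`). -/
def tg (i : ℕ) : GBV := PresentedGroup.of (BVGen.t (i - 1))

/-- H_n: the subgroup of `BV` generated by the B_n generators
`σ_1, …, σ_{n-2}, τ_{n-1}`. -/
def Hn (n : ℕ) : Subgroup GBV :=
  Subgroup.closure ({g | ∃ i, 1 ≤ i ∧ i + 2 ≤ n ∧ g = sg i} ∪ {tg (n - 1)})

end GBV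

namespace GBV

/-- `N(u)` for a positive x-word given by its list of indices:
`N(empty) = 0`, `N(u x_j) = max (N u + 1) (j + 2)`. -/
def Nval (l : List ℕ) : ℕ := l.foldl (fun acc j => max (acc + 1) (j + 2)) 0

/-- The B_n generators, as letters: `σ_1, …, σ_{n-2}, τ_{n-1}`. -/
def BnGen (n : ℕ) : Set BVGen :=
  {g | (∃ i, 1 ≤ i ∧ i + 2 ≤ n ∧ g = BVGen.s (i - 1)) ∨ (2 ≤ n ∧ g = BVGen.t (n - 2))}

/-- A block `w₁ w₂ w₃⁻¹`: `w₁` and `w₃` are positive x-words with nondecreasing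
indices (i.e. of the form `x_{i₁}^{r₁} ⋯ x_{i_k}^{r_k}` with `i₁ < ⋯ < i_k`, `r_m ≥ 1`),
recorded as lists of indices, and `w₂` is a word in the B_n generators and their
inverses (letters with a sign) for some `n ≥ max (N w₁) (N w₃) + 1`. -/
structure Block where
  w1 : List ℕ
  w2 : List (BVGen × Bool)
  w3 : List ℕ
  n : ℕ
  h1 : w1.Chain' (· ≤ ·)
  h3 : w3.Chain' (· ≤ ·)
  h2 : ∀ p ∈ w2, p.1 ∈ BnGen n
  hbound : max (Nval w1) (Nval w3) + 1 ≤ n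

/-- Evaluation of a positive x-word in `BV`. -/
def evalX (l : List ℕ) : GBV := (l.map xg).prod

/-- Evaluation of a signed word in the generators in `BV`. -/
def evalW (l : List (BVGen × Bool)) : GBV :=
  (l.map (fun p => if p.2 then PresentedGroup.of p.1 else (PresentedGroup.of p.1)⁻¹)).prod

/-- The element of `BV` represented by a block. -/
def Block.eval (b : Block) : GBV := evalX b.w1 * evalW b.w2 * (evalX b.w3)⁻¹

end GBV



namespace GBV
open BVGen

abbrev φ : FreeGroup BVGen →* GBV := PresentedGroup.mk bvRels

lemma phi_X (i : ℕ) : φ (X i) = xg i := rfl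
lemma phi_S (i : ℕ) : φ (S i) = sg i := rfl
lemma phi_T (i : ℕ) : φ (T i) = tg i := rfl

lemma mem_rel_eq {u v : FreeGroup BVGen} (h : grel u v ∈ bvRels) : φ u = φ v := by
  have h1 : φ (grel u v) = 1 :=
    (QuotientGroup.eq_one_iff _).mpr (Subgroup.subset_normalClosure h)
  have h2 : φ u * (φ v)⁻¹ = 1 := by
    simpa [grel, map_mul, map_inv] using h1
  exact mul_inv_eq_one.mp h2

lemma rA {i j : ℕ} (h : i < j) : xg j * xg i = xg i * xg (j + 1) := by
  have := mem_rel_eq (Or.inl ⟨i, j, h, rfl⟩)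
  simpa [map_mul, phi_X] using this

lemma rC1 {i j : ℕ} (h1 : 1 ≤ i) (h2 : i < j) : sg i * xg j = xg j * sg i := by
  have := mem_rel_eq (show _ ∈ bvRels from
    Or.inr <| Or.inr <| Or.inr <| Or.inr <| Or.inr <| Or.inl ⟨i, j, h1, h2, rfl⟩)
  simpa [map_mul, phi_X, phi_S] using this

lemma rC2s (b : ℕ) : sg (b+1) * xg (b+1) = xg b * sg (b+2) * sg (b+1) := by
  have := mem_rel_eq (show _ ∈ bvRels from
    Or.inr <| Or.inr <| Or.inr <| Or.inr <| Or.inr <| Or.inr <| Or.inl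
      ⟨b+1, Nat.le_add_left 1 b, rfl⟩)
  simpa [map_mul, phi_X, phi_S] using this

lemma rC3 {i j : ℕ} (h : j + 2 ≤ i) : sg i * xg j = xg j * sg (i+1) := by
  have := mem_rel_eq (show _ ∈ bvRels from
    Or.inr <| Or.inr <| Or.inr <| Or.inr <| Or.inr <| Or.inr <| Or.inr <| Or.inl ⟨i, j, h, rfl⟩)
  simpa [map_mul, phi_X, phi_S] using this

lemma rC4 (i : ℕ) : sg (i+1) * xg i = xg (i+1) * sg (i+1) * sg (i+2) := by
  have := mem_rel_eq (show _ ∈ bvRels from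
    Or.inr <| Or.inr <| Or.inr <| Or.inr <| Or.inr <| Or.inr <| Or.inr <| Or.inr <| Or.inl
      ⟨i, rfl⟩)
  simpa [map_mul, phi_X, phi_S] using this

lemma rD1 {i j : ℕ} (h : j + 2 ≤ i) : tg i * xg j = xg j * tg (i+1) := by
  have := mem_rel_eq (show _ ∈ bvRels from
    Or.inr <| Or.inr <| Or.inr <| Or.inr <| Or.inr <| Or.inr <| Or.inr <| Or.inr <| Or.inr <|
      Or.inl ⟨i, j, h, rfl⟩)
  simpa [map_mul, phi_X, phi_T] using this

lemma rD2s (b : ℕ) : tg (b+1) * xg b = sg (b+1) * tg (b+2) := by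
  have := mem_rel_eq (show _ ∈ bvRels from
    Or.inr <| Or.inr <| Or.inr <| Or.inr <| Or.inr <| Or.inr <| Or.inr <| Or.inr <| Or.inr <|
      Or.inr <| Or.inl ⟨b+1, Nat.le_add_left 1 b, rfl⟩)
  simpa [map_mul, phi_X, phi_S, phi_T] using this

lemma rD3s (b : ℕ) : tg (b+1) = xg b * tg (b+2) * sg (b+1) := by
  have := mem_rel_eq (show _ ∈ bvRels from
    Or.inr <| Or.inr <| Or.inr <| Or.inr <| Or.inr <| Or.inr <| Or.inr <| Or.inr <| Or.inr <|
      Or.inr <| Or.inr ⟨b+1, Nat.le_add_left 1 b, rfl⟩)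
  simpa [map_mul, phi_X, phi_S, phi_T] using this

end GBV
namespace GBV
open BVGen

/-- single signed letter -/
def letE (a : BVGen) (ε : Bool) : GBV :=
  if ε then PresentedGroup.of a else (PresentedGroup.of a)⁻¹

/-- σ_{a+1} with sign -/
def sgl (a : ℕ) (ε : Bool) : GBV := letE (BVGen.s a) ε
/-- τ_{c+1} with sign -/
def tE (c : ℕ) (ε : Bool) : GBV := letE (BVGen.t c) ε

lemma sgl_t (a : ℕ) : sgl a true = sg (a+1) := rfl
lemma sgl_f (a : ℕ) : sgl a false = (sg (a+1))⁻¹ := rfl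
lemma tE_t (c : ℕ) : tE c true = tg (c+1) := rfl
lemma tE_f (c : ℕ) : tE c false = (tg (c+1))⁻¹ := rfl

section helpers
variable {G : Type*} [Group G] {p q r : G}

lemma cInv1 (h : p * q = q * r) : p⁻¹ * q = q * r⁻¹ := by
  rw [inv_mul_eq_iff_eq_mul, ← mul_assoc, h, mul_inv_cancel_right]

lemma cInv2 (h : p * q = q * r) : q⁻¹ * p = r * q⁻¹ := by
  rw [inv_mul_eq_iff_eq_mul, ← mul_assoc, ← h, mul_inv_cancel_right]

end helpers

section derived
variable {a k c j : ℕ}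

lemma eSx_lt (h : a + 1 < k) : ∀ ε, sgl a ε * xg k = xg k * sgl a ε := by
  have h0 := rC1 (Nat.le_add_left 1 a) h
  rintro (_|_)
  · rw [sgl_f]; exact cInv1 h0
  · exact h0

lemma eSx_eq1 : ∀ ε, sgl a ε * xg (a+1) = xg a * sgl (a+1) ε * sgl a ε := by
  rintro (_|_)
  · rw [sgl_f, sgl_f]
    rw [inv_mul_eq_iff_eq_mul, ← mul_assoc, ← mul_assoc, rC4 a,
      mul_inv_cancel_right, mul_inv_cancel_right]
  · rw [sgl_t, sgl_t]; exact rC2s a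

lemma eSx_eq2 : ∀ ε, sgl a ε * xg a = xg (a+1) * sgl a ε * sgl (a+1) ε := by
  rintro (_|_)
  · rw [sgl_f, sgl_f]
    rw [inv_mul_eq_iff_eq_mul, ← mul_assoc, ← mul_assoc, rC2s a,
      mul_inv_cancel_right, mul_inv_cancel_right]
  · rw [sgl_t, sgl_t]; exact rC4 a

lemma eSx_ge (h : k + 1 ≤ a) : ∀ ε, sgl a ε * xg k = xg k * sgl (a+1) ε := by
  have h0 := rC3 (show k + 2 ≤ a + 1 by omega)
  rintro (_|_)
  · rw [sgl_f, sgl_f]; exact cInv1 h0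
  · exact h0

lemma eTx_pass (h : k + 1 ≤ c) : ∀ ε, tE c ε * xg k = xg k * tE (c+1) ε := by
  have h0 := rD1 (show k + 2 ≤ c + 1 by omega)
  rintro (_|_)
  · rw [tE_f, tE_f]; exact cInv1 h0
  · exact h0

lemma eTx_van : ∀ ε, tE c ε * xg c = sgl c ε * tE (c+1) ε := by
  rintro (_|_)
  · rw [tE_f, tE_f, sgl_f, rD3s c]; group
  · exact rD2s c

lemma eTexp : ∀ ε, tE c ε = xg c * tE (c+1) ε * sgl c ε := by
  rintro (_|_)
  · rw [tE_f, tE_f, sgl_f]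
    have h1 : tg (c+1) = sg (c+1) * tg (c+2) * (xg c)⁻¹ := by
      rw [eq_comm, mul_inv_eq_iff_eq_mul]; exact (rD2s c).symm
    rw [h1]; group
  · exact rD3s c

lemma eTexp2 : ∀ ε, tE c ε = sgl c ε * tE (c+1) ε * (xg c)⁻¹ := by
  rintro (_|_)
  · rw [tE_f, tE_f, sgl_f, rD3s c]; group
  · rw [tE_t, tE_t, sgl_t]
    rw [eq_comm, mul_inv_eq_iff_eq_mul]; exact (rD2s c).symm

lemma eXiT_ge (h : j + 1 ≤ c) : ∀ ε, (xg j)⁻¹ * tE c ε = tE (c+1) ε * (xg j)⁻¹ := by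
  intro ε
  exact cInv2 (eTx_pass (k := j) h ε)

lemma eXiT_van : ∀ ε, (xg j)⁻¹ * tE j ε = tE (j+1) ε * sgl j ε := by
  rintro (_|_)
  · rw [tE_f, tE_f, sgl_f]
    have := congrArg (·⁻¹) (rD2s j)
    simp only [mul_inv_rev] at this
    simpa [mul_assoc] using this
  · rw [tE_t, tE_t, sgl_t, rD3s j]; group

lemma eXiS_lt (h : a + 1 < j) : ∀ ε, (xg j)⁻¹ * sgl a ε = sgl a ε * (xg j)⁻¹ := by
  intro ε
  exact cInv2 (eSx_lt (k := j) h ε)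

lemma eXiS_eq : ∀ ε, (xg (c+1))⁻¹ * sgl c ε = sgl c ε * sgl (c+1) ε * (xg c)⁻¹ := by
  rintro (_|_)
  · rw [sgl_f, sgl_f]
    rw [show (xg (c+1))⁻¹ * (sg (c+1))⁻¹ = (sg (c+1) * xg (c+1))⁻¹ by group, rC2s c]
    group
  · rw [sgl_t, sgl_t]
    rw [inv_mul_eq_iff_eq_mul, ← mul_assoc, ← mul_assoc, ← rC4 c, mul_inv_cancel_right]

lemma eAinv1 (h : a < j) : (xg j)⁻¹ * xg a = xg a * (xg (j+1))⁻¹ :=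
  cInv1 (rA h)

lemma eAinv2 (h : j < a) : (xg j)⁻¹ * xg a = xg (a+1) * (xg j)⁻¹ :=
  cInv2 (rA h)

end derived
end GBV
namespace GBV
open BVGen List

/-! ### eval basics -/

@[simp] lemma evalX_nil : evalX [] = 1 := rfl
@[simp] lemma evalX_cons (j : ℕ) (l : List ℕ) : evalX (j :: l) = xg j * evalX l := by
  simp [evalX]
@[simp] lemma evalX_append (l₁ l₂ : List ℕ) : evalX (l₁ ++ l₂) = evalX l₁ * evalX l₂ := by
  simp [evalX]
@[simp] lemma evalX_single (j : ℕ) : evalX [j] = xg j := by simp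

@[simp] lemma evalW_nil : evalW [] = 1 := rfl
@[simp] lemma evalW_cons (p : BVGen × Bool) (w : List (BVGen × Bool)) :
    evalW (p :: w) = letE p.1 p.2 * evalW w := by
  simp [evalW, letE]
@[simp] lemma evalW_append (w₁ w₂ : List (BVGen × Bool)) :
    evalW (w₁ ++ w₂) = evalW w₁ * evalW w₂ := by simp [evalW]
@[simp] lemma evalW_single (p : BVGen × Bool) : evalW [p] = letE p.1 p.2 := by
  simp

/-- evaluation of a signed σ-word (codes: `a` ↦ `σ_{a+1}`) -/
def evalS (B : List (ℕ × Bool)) : GBV := (B.map fun p => sgl p.1 p.2).prod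

@[simp] lemma evalS_nil : evalS [] = 1 := rfl
@[simp] lemma evalS_cons (p : ℕ × Bool) (B : List (ℕ × Bool)) :
    evalS (p :: B) = sgl p.1 p.2 * evalS B := by simp [evalS]
@[simp] lemma evalS_append (B₁ B₂ : List (ℕ × Bool)) :
    evalS (B₁ ++ B₂) = evalS B₁ * evalS B₂ := by simp [evalS]
@[simp] lemma evalS_single (p : ℕ × Bool) : evalS [p] = sgl p.1 p.2 := by simp

/-- σ-word as a general word -/
def toW (B : List (ℕ × Bool)) : List (BVGen × Bool) := B.map fun p => (BVGen.s p.1, p.2)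

@[simp] lemma evalW_toW (B : List (ℕ × Bool)) : evalW (toW B) = evalS B := by
  induction B with
  | nil => rfl
  | cons p B ih =>
    simp only [toW] at ih
    simp [toW, ih, sgl]

def xO : Option ℕ → GBV := fun o => o.elim 1 xg
@[simp] lemma xO_none : xO none = 1 := rfl
@[simp] lemma xO_some (k : ℕ) : xO (some k) = xg k := rfl
@[simp] lemma evalX_toList (o : Option ℕ) : evalX o.toList = xO o := by cases o <;> simp

/-! ### Nval lemmas -/

@[simp] lemma Nval_nil : Nval [] = 0 := rfl

lemma Nval_append (A l : List ℕ) :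
    Nval (A ++ l) = l.foldl (fun acc j => max (acc + 1) (j + 2)) (Nval A) := by
  simp [Nval, List.foldl_append]

lemma Nval_append1 (l : List ℕ) (j : ℕ) :
    Nval (l ++ [j]) = max (Nval l + 1) (j + 2) := by
  simp [Nval_append]

lemma Nval_congr_append {A B : List ℕ} (h : Nval A = Nval B) (l : List ℕ) :
    Nval (A ++ l) = Nval (B ++ l) := by
  rw [Nval_append, Nval_append, h]

lemma NB {U : List ℕ} {o : Option ℕ} {m : ℕ} (h1 : Nval U + 1 ≤ m + 2)
    (h2 : ∀ k ∈ o, k ≤ m) : Nval (U ++ o.toList) + 1 ≤ m + 3 := by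
  cases o with
  | none => simpa using Nat.le_succ_of_le h1
  | some k =>
    have := h2 k rfl
    simp only [Option.toList_some, Nval_append1]
    omega

/-! ### sorting -/

def prA : List ℕ → ℕ → List ℕ
  | [], j => [j]
  | a :: r, j => if a ≤ j then j :: a :: r else (a+1) :: prA r j

lemma prA_eval : ∀ (r : List ℕ) (j : ℕ),
    evalX (prA r j).reverse = evalX r.reverse * xg j := by
  intro r
  induction r with
  | nil => intro j; simp [prA]
  | cons a r ih =>
    intro j
    by_cases h : a ≤ j
    · simp [prA, h, mul_assoc]
    · push_neg at h
      simp only [prA, if_neg (not_le.mpr h), List.reverse_cons, evalX_append, evalX_single, ih j]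
      rw [mul_assoc, mul_assoc, ← rA h]

lemma prA_head (r : List ℕ) (j : ℕ) :
    (prA r j).head? = some j ∨
      ∃ b r', r = b :: r' ∧ j < b ∧ (prA r j).head? = some (b+1) := by
  cases r with
  | nil => left; rfl
  | cons a r =>
    by_cases h : a ≤ j
    · left; simp [prA, h]
    · right; exact ⟨a, r, rfl, not_le.mp h, by simp [prA, h]⟩

lemma prA_sorted : ∀ (r : List ℕ) (j : ℕ),
    Chain' (fun x y => y ≤ x) r → Chain' (fun x y => y ≤ x) (prA r j) := by
  intro r
  induction r with
  | nil => intro j _; simp [prA, List.Chain']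
  | cons a r ih =>
    intro j hc
    simp only [List.Chain'] at hc ⊢
    by_cases h : a ≤ j
    · rw [prA, if_pos h, List.isChain_cons_cons]; exact ⟨h, hc⟩
    · push_neg at h
      rw [prA, if_neg (not_le.mpr h)]
      rw [List.isChain_cons]
      refine ⟨?_, ih j hc.tail⟩
      intro y hy
      rcases prA_head r j with h1 | ⟨b, r', rfl, hjb, h1⟩
      · rw [h1] at hy; simp at hy; omega
      · rw [h1] at hy; simp at hy
        have hba : b ≤ a := (List.isChain_cons_cons.mp hc).1
        omega

lemma prA_Nval : ∀ (r : List ℕ) (j : ℕ),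
    Nval (prA r j).reverse = Nval (r.reverse ++ [j]) := by
  intro r
  induction r with
  | nil => intro j; simp [prA]
  | cons a r ih =>
    intro j
    by_cases h : a ≤ j
    · simp [prA, h]
    · push_neg at h
      rw [prA, if_neg (not_le.mpr h)]
      simp only [List.reverse_cons]
      rw [Nval_append1, ih j, Nval_append1]
      rw [show r.reverse ++ [a] ++ [j] = (r.reverse ++ [a]) ++ [j] by simp]
      rw [Nval_append1, Nval_append1]
      omega

def pr (l : List ℕ) (j : ℕ) : List ℕ := (prA l.reverse j).reverse

lemma pr_eval (l : List ℕ) (j : ℕ) : evalX (pr l j) = evalX l * xg j := by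
  have := prA_eval l.reverse j
  simpa [pr] using this

lemma pr_sorted {l : List ℕ} (h : Chain' (· ≤ ·) l) (j : ℕ) : Chain' (· ≤ ·) (pr l j) := by
  rw [pr]
  simp only [List.Chain'] at h ⊢
  apply List.isChain_reverse.mpr
  apply prA_sorted
  exact List.isChain_reverse.mpr h

lemma pr_Nval (l : List ℕ) (j : ℕ) : Nval (pr l j) = Nval (l ++ [j]) := by
  have := prA_Nval l.reverse j
  simpa [pr] using this

def sortX (l : List ℕ) : List ℕ := l.foldl pr []

lemma foldPr_eval : ∀ (l acc : List ℕ), evalX (l.foldl pr acc) = evalX acc * evalX l := by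
  intro l
  induction l with
  | nil => intro acc; simp
  | cons j l ih => intro acc; simp [List.foldl_cons, ih, pr_eval, mul_assoc]

lemma foldPr_sorted : ∀ (l acc : List ℕ), Chain' (· ≤ ·) acc →
    Chain' (· ≤ ·) (l.foldl pr acc) := by
  intro l
  induction l with
  | nil => intro acc h; exact h
  | cons j l ih => intro acc h; exact ih _ (pr_sorted h j)

lemma foldPr_Nval : ∀ (l acc : List ℕ), Nval (l.foldl pr acc) = Nval (acc ++ l) := by
  intro l
  induction l with
  | nil => intro acc; simp
  | cons j l ih =>
    intro acc
    rw [List.foldl_cons, ih, Nval_congr_append (pr_Nval acc j) l]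
    simp

lemma sortX_eval (l : List ℕ) : evalX (sortX l) = evalX l := by
  simpa [sortX] using foldPr_eval l []

lemma sortX_sorted (l : List ℕ) : Chain' (· ≤ ·) (sortX l) :=
  foldPr_sorted l [] (by simp [List.Chain'])

lemma sortX_Nval (l : List ℕ) : Nval (sortX l) = Nval l := by
  simpa [sortX] using foldPr_Nval l []

/-! ### single negative x through a positive word -/

lemma snp : ∀ (v : List ℕ) (j : ℕ), ∃ (v' : List ℕ) (o : Option ℕ),
    (xg j)⁻¹ * evalX v = evalX v' * (xO o)⁻¹ := by
  intro v
  induction v with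
  | nil => intro j; exact ⟨[], some j, by simp⟩
  | cons a v ih =>
    intro j
    rcases lt_trichotomy a j with h | h | h
    · obtain ⟨v', o, hv⟩ := ih (j+1)
      refine ⟨a :: v', o, ?_⟩
      rw [evalX_cons, ← mul_assoc, eAinv1 h, mul_assoc, hv, evalX_cons, mul_assoc]
    · subst h
      refine ⟨v, none, ?_⟩
      simp [← mul_assoc]
    · obtain ⟨v', o, hv⟩ := ih j
      refine ⟨(a+1) :: v', o, ?_⟩
      rw [evalX_cons, ← mul_assoc, eAinv2 h, mul_assoc, hv, evalX_cons, mul_assoc]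

/-! ### pushing σ-words right through positive words -/

lemma pushW1L : ∀ (B : List (ℕ × Bool)) (k : ℕ), ∃ (k' : ℕ) (C : List (ℕ × Bool)),
    evalS B * xg k = xg k' * evalS C := by
  intro B
  induction B using List.reverseRecOn with
  | nil => intro k; exact ⟨k, [], by simp⟩
  | append_singleton B p ih =>
    intro k
    obtain ⟨a, ε⟩ := p
    rcases lt_trichotomy (a+1) k with h | h | h
    · obtain ⟨k', C, hC⟩ := ih k
      refine ⟨k', C ++ [(a, ε)], ?_⟩
      rw [evalS_append, evalS_single, mul_assoc, eSx_lt h ε, ← mul_assoc, hC]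
      simp [mul_assoc]
    · obtain ⟨k', C, hC⟩ := ih a
      refine ⟨k', C ++ [(a+1, ε), (a, ε)], ?_⟩
      rw [evalS_append, evalS_single, mul_assoc, ← h, eSx_eq1 ε, ← mul_assoc, ← mul_assoc, hC]
      simp [mul_assoc]
    · obtain ⟨k', C, hC⟩ := ih (a+1)
      have hak : a = k ∨ k + 1 ≤ a := by omega
      rcases hak with rfl | hak
      · refine ⟨k', C ++ [(a, ε), (a+1, ε)], ?_⟩
        rw [evalS_append, evalS_single, mul_assoc, eSx_eq2 ε, ← mul_assoc, ← mul_assoc, hC]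
        simp [mul_assoc]
      · obtain ⟨k'', C', hC'⟩ := ih k
        refine ⟨k'', C' ++ [(a+1, ε)], ?_⟩
        rw [evalS_append, evalS_single, mul_assoc, eSx_ge hak ε, ← mul_assoc, hC']
        simp [mul_assoc]

lemma pushSWL : ∀ (l : List ℕ) (B : List (ℕ × Bool)), ∃ (l' : List ℕ) (C : List (ℕ × Bool)),
    l'.length = l.length ∧ evalS B * evalX l = evalX l' * evalS C := by
  intro l
  induction l with
  | nil => intro B; exact ⟨[], B, rfl, by simp⟩
  | cons k l ih =>
    intro B
    obtain ⟨k₁, C₁, h1⟩ := pushW1L B k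
    obtain ⟨l', C, hlen, h2⟩ := ih C₁
    refine ⟨k₁ :: l', C, by simp [hlen], ?_⟩
    rw [evalX_cons, ← mul_assoc, h1, mul_assoc, h2, evalX_cons, mul_assoc]

def invS (B : List (ℕ × Bool)) : List (ℕ × Bool) := B.reverse.map fun p => (p.1, !p.2)

@[simp] lemma sgl_not (a : ℕ) (ε : Bool) : sgl a (!ε) = (sgl a ε)⁻¹ := by
  cases ε <;> simp [sgl_t, sgl_f]

@[simp] lemma evalS_invS (B : List (ℕ × Bool)) : evalS (invS B) = (evalS B)⁻¹ := by
  induction B with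
  | nil => simp [invS]
  | cons p B ih =>
    simp only [invS, List.reverse_cons, List.map_append, List.map_cons, List.map_nil]
    rw [evalS_append]
    simp only [invS] at ih
    rw [ih, evalS_cons]
    simp [mul_assoc]

lemma pushT : ∀ (l : List ℕ) (B : List (ℕ × Bool)), ∃ (C : List (ℕ × Bool)) (l' : List ℕ),
    l'.length = l.length ∧ (evalX l)⁻¹ * evalS B = evalS C * (evalX l')⁻¹ := by
  intro l B
  obtain ⟨l', C₀, hlen, h⟩ := pushSWL l (invS B)
  refine ⟨invS C₀, l', hlen, ?_⟩
  have := congrArg (·⁻¹) h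
  simp only [mul_inv_rev, evalS_invS, inv_inv] at this
  simpa using this
end GBV
namespace GBV
open BVGen List

/-- letters allowed at level `ν` (i.e. in `B_{ν+2}`): `σ_1,…,σ_{ν+1}` (codes `a < ν`
give `σ_{a+1}`... wait codes `a` with `a < ν` give `σ_{a+1} ≤ σ_ν`) and `τ_{ν+1}`. -/
def Lev (ν : ℕ) (w : List (BVGen × Bool)) : Prop :=
  ∀ p ∈ w, (∃ a, a < ν ∧ p.1 = BVGen.s a) ∨ p.1 = BVGen.t ν

lemma Lev_nil (ν : ℕ) : Lev ν [] := by intro p hp; cases hp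

lemma Lev_append {ν w₁ w₂} (h1 : Lev ν w₁) (h2 : Lev ν w₂) : Lev ν (w₁ ++ w₂) := by
  intro p hp
  rcases List.mem_append.mp hp with h | h
  · exact h1 p h
  · exact h2 p h

lemma Lev_append_left {ν w₁ w₂} (h : Lev ν (w₁ ++ w₂)) : Lev ν w₁ :=
  fun p hp => h p (List.mem_append.mpr (Or.inl hp))

lemma Lev_append_right {ν w₁ w₂} (h : Lev ν (w₁ ++ w₂)) : Lev ν w₂ :=
  fun p hp => h p (List.mem_append.mpr (Or.inr hp))

lemma Lev_s {ν a ε} (h : a < ν) : Lev ν [(BVGen.s a, ε)] := by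
  intro p hp; simp at hp; subst hp; exact Or.inl ⟨a, h, rfl⟩

lemma Lev_t {ν ε} : Lev ν [(BVGen.t ν, ε)] := by
  intro p hp; simp at hp; subst hp; exact Or.inr rfl

@[simp] lemma letE_s (a : ℕ) (ε : Bool) : letE (BVGen.s a) ε = sgl a ε := rfl
@[simp] lemma letE_t (c : ℕ) (ε : Bool) : letE (BVGen.t c) ε = tE c ε := rfl

@[simp] lemma evalW_pair (p q : BVGen × Bool) :
    evalW [p, q] = letE p.1 p.2 * letE q.1 q.2 := by simp

section glue
variable {w₀ w₁ L : List (BVGen × Bool)} {p : BVGen × Bool} {k k₁ ν : ℕ} {o : Option ℕ}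

lemma glue1 (h2 : letE p.1 p.2 * xg k = xg k₁ * evalW L)
    (h1 : evalW w₀ * xg k₁ = xO o * evalW w₁) :
    evalW (w₀ ++ [p]) * xg k = xO o * evalW (w₁ ++ L) := by
  rw [evalW_append, evalW_single, mul_assoc, h2, ← mul_assoc, h1, evalW_append, mul_assoc]

lemma glue2 (h2 : letE p.1 p.2 * xg k = evalW L)
    (h1 : evalW w₀ = xO o * evalW w₁) :
    evalW (w₀ ++ [p]) * xg k = xO o * evalW (w₁ ++ L) := by
  rw [evalW_append, evalW_single, mul_assoc, h2, h1, evalW_append, mul_assoc]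

lemma glue3 (h1 : evalW w₀ = xO o * evalW w₁) :
    evalW (w₀ ++ [p]) = xO o * evalW (w₁ ++ [p]) := by
  rw [evalW_append, h1, evalW_append, mul_assoc]

lemma glue4 (h2 : letE p.1 p.2 = xg ν * evalW L)
    (h1 : evalW w₀ * xg ν = xO o * evalW w₁) :
    evalW (w₀ ++ [p]) = xO o * evalW (w₁ ++ L) := by
  rw [evalW_append, evalW_single, h2, ← mul_assoc, h1, evalW_append, mul_assoc]

end glue

lemma moveRaise : ∀ (L : ℕ) (w : List (BVGen × Bool)), w.length ≤ L → ∀ ν, Lev ν w →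
    ((∀ k, k ≤ ν → ∃ (o : Option ℕ) (w' : List (BVGen × Bool)), (∀ k' ∈ o, k' ≤ ν) ∧
        Lev (ν+1) w' ∧ evalW w * xg k = xO o * evalW w') ∧
     (∃ (o : Option ℕ) (w' : List (BVGen × Bool)), (∀ k' ∈ o, k' ≤ ν) ∧
        Lev (ν+1) w' ∧ evalW w = xO o * evalW w')) := by
  intro L
  induction L with
  | zero =>
    intro w hw ν _
    rw [Nat.le_zero, List.length_eq_zero_iff] at hw
    subst hw
    constructor
    · intro k hk
      exact ⟨some k, [], by simpa using hk, Lev_nil _, by simp⟩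
    · exact ⟨none, [], by simp, Lev_nil _, by simp⟩
  | succ L ih =>
    intro w hw ν hLev
    rcases List.eq_nil_or_concat w with rfl | ⟨w₀, p, hconc⟩
    on_goal 2 => subst hconc; simp only [List.concat_eq_append] at hw hLev ⊢
    · constructor
      · intro k hk
        exact ⟨some k, [], by simpa using hk, Lev_nil _, by simp⟩
      · exact ⟨none, [], by simp, Lev_nil _, by simp⟩
    · have hlen : w₀.length ≤ L := by
        have := hw; simp [List.length_append] at this; omega
      have hw₀ : Lev ν w₀ := Lev_append_left hLev
      have hp := hLev p (List.mem_append.mpr (Or.inr (by simp)))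
      obtain ⟨ihM, ihR⟩ := ih w₀ hlen ν hw₀
      obtain ⟨g, ε⟩ := p
      rcases hp with ⟨a, ha, hg⟩ | hg <;> simp only at hg <;> subst hg
      · -- σ letter
        constructor
        · intro k hk
          rcases lt_trichotomy (a+1) k with hc | hc | hc
          · obtain ⟨o, w₁, ho, hL1, h1⟩ := ihM k hk
            refine ⟨o, w₁ ++ [(BVGen.s a, ε)], ho, Lev_append hL1 (Lev_s (by omega)), ?_⟩
            exact glue1 (by simpa using eSx_lt hc ε) h1
          · obtain ⟨o, w₁, ho, hL1, h1⟩ := ihM a (by omega)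
            refine ⟨o, w₁ ++ [(BVGen.s (a+1), ε), (BVGen.s a, ε)], ho,
              Lev_append hL1 (Lev_append (Lev_s (by omega)) (Lev_s (by omega))), ?_⟩
            have h2 : letE (BVGen.s a) ε * xg k = xg a *
                evalW [(BVGen.s (a+1), ε), (BVGen.s a, ε)] := by
              simp only [evalW_pair, letE_s, ← hc]
              rw [← mul_assoc]
              exact eSx_eq1 ε
            exact glue1 h2 h1
          · rcases (show a = k ∨ k + 1 ≤ a by omega) with rfl | hak
            · obtain ⟨o, w₁, ho, hL1, h1⟩ := ihM (a+1) (by omega)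
              refine ⟨o, w₁ ++ [(BVGen.s a, ε), (BVGen.s (a+1), ε)], ho,
                Lev_append hL1 (Lev_append (Lev_s (by omega)) (Lev_s (by omega))), ?_⟩
              have h2 : letE (BVGen.s a) ε * xg a = xg (a+1) *
                  evalW [(BVGen.s a, ε), (BVGen.s (a+1), ε)] := by
                simp only [evalW_pair, letE_s]
                rw [← mul_assoc]
                exact eSx_eq2 ε
              exact glue1 h2 h1
            · obtain ⟨o, w₁, ho, hL1, h1⟩ := ihM k hk
              refine ⟨o, w₁ ++ [(BVGen.s (a+1), ε)], ho,
                Lev_append hL1 (Lev_s (by omega)), ?_⟩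
              exact glue1 (by simpa using eSx_ge hak ε) h1
        · obtain ⟨o, w₁, ho, hL1, h1⟩ := ihR
          exact ⟨o, w₁ ++ [(BVGen.s a, ε)], ho, Lev_append hL1 (Lev_s (by omega)), glue3 h1⟩
      · -- τ letter
        constructor
        · intro k hk
          rcases (show k < ν ∨ k = ν by omega) with hc | rfl
          · obtain ⟨o, w₁, ho, hL1, h1⟩ := ihM k hk
            refine ⟨o, w₁ ++ [(BVGen.t (ν+1), ε)], ho, Lev_append hL1 Lev_t, ?_⟩
            exact glue1 (by simpa using eTx_pass hc ε) h1
          · obtain ⟨o, w₁, ho, hL1, h1⟩ := ihR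
            refine ⟨o, w₁ ++ [(BVGen.s k, ε), (BVGen.t (k+1), ε)], ho,
              Lev_append hL1 (Lev_append (Lev_s (by omega)) Lev_t), ?_⟩
            have h2 : letE (BVGen.t k) ε * xg k =
                evalW [(BVGen.s k, ε), (BVGen.t (k+1), ε)] := by
              simp only [evalW_pair, letE_s, letE_t]
              exact eTx_van ε
            exact glue2 h2 h1
        · obtain ⟨o, w₁, ho, hL1, h1⟩ := ihM ν le_rfl
          refine ⟨o, w₁ ++ [(BVGen.t (ν+1), ε), (BVGen.s ν, ε)], ho,
            Lev_append hL1 (Lev_append Lev_t (Lev_s (by omega))), ?_⟩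
          have h2 : letE (BVGen.t ν) ε = xg ν *
              evalW [(BVGen.t (ν+1), ε), (BVGen.s ν, ε)] := by
            simp only [evalW_pair, letE_s, letE_t]
            rw [← mul_assoc]
            exact eTexp ε
          exact glue4 h2 h1

lemma moveL {ν : ℕ} {w : List (BVGen × Bool)} (h : Lev ν w) {k : ℕ} (hk : k ≤ ν) :
    ∃ (o : Option ℕ) (w' : List (BVGen × Bool)), (∀ k' ∈ o, k' ≤ ν) ∧
      Lev (ν+1) w' ∧ evalW w * xg k = xO o * evalW w' :=
  (moveRaise w.length w le_rfl ν h).1 k hk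

lemma raiseL {ν : ℕ} {w : List (BVGen × Bool)} (h : Lev ν w) :
    ∃ (o : Option ℕ) (w' : List (BVGen × Bool)), (∀ k' ∈ o, k' ≤ ν) ∧
      Lev (ν+1) w' ∧ evalW w = xO o * evalW w' :=
  (moveRaise w.length w le_rfl ν h).2

/-- iterated raising, carrying the positive word `U` along -/
lemma raiseStar : ∀ (d ν : ℕ) (w : List (BVGen × Bool)) (U : List ℕ), Lev ν w →
    Nval U + 1 ≤ ν + 2 → ∃ (U' : List ℕ) (w' : List (BVGen × Bool)),
      Lev (ν+d) w' ∧ Nval U' + 1 ≤ ν + d + 2 ∧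
      evalX U * evalW w = evalX U' * evalW w' := by
  intro d
  induction d with
  | zero => intro ν w U h hU; exact ⟨U, w, h, hU, rfl⟩
  | succ d ih =>
    intro ν w U h hU
    obtain ⟨o, w₁, ho, hL1, h1⟩ := raiseL h
    obtain ⟨U', w', hL', hU', h2⟩ := ih (ν+1) w₁ (U ++ o.toList) hL1
      (by have := NB hU ho; omega)
    refine ⟨U', w', ?_, by omega, ?_⟩
    · have he : ν + 1 + d = ν + (d + 1) := by omega
      rw [← he]; exact hL'
    · rw [h1, ← mul_assoc, ← h2, evalX_append, evalX_toList, mul_assoc]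
end GBV
namespace GBV
open BVGen List

/-- local: a negative `x_j` against a signed `τ_{c+1}` -/
lemma lxt : ∀ (d c j : ℕ) (ε : Bool), j - c ≤ d →
    ∃ (A : List (ℕ × Bool)) (c' : ℕ) (B : List (ℕ × Bool)) (vt : List ℕ),
      (xg j)⁻¹ * tE c ε = evalS A * tE c' ε * evalS B * (evalX vt)⁻¹ := by
  intro d
  induction d with
  | zero =>
    intro c j ε hd
    have hcj : j ≤ c := by omega
    rcases (show c = j ∨ j + 1 ≤ c by omega) with rfl | hge
    · exact ⟨[], c+1, [(c, ε)], [], by simpa using eXiT_van ε⟩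
    · exact ⟨[], c+1, [], [j], by simpa using eXiT_ge hge ε⟩
  | succ d ih =>
    intro c j ε hd
    rcases (show j ≤ c ∨ c + 1 = j ∨ c + 1 < j by omega) with hle | heq | hlt
    · rcases (show c = j ∨ j + 1 ≤ c by omega) with rfl | hge
      · exact ⟨[], c+1, [(c, ε)], [], by simpa using eXiT_van ε⟩
      · exact ⟨[], c+1, [], [j], by simpa using eXiT_ge hge ε⟩
    · -- c + 1 = j : explicit resolution
      subst heq
      refine ⟨[(c, ε), (c+1, ε)], c+2, [], [c, c], ?_⟩
      calc (xg (c+1))⁻¹ * tE c ε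
          = (xg (c+1))⁻¹ * (sgl c ε * tE (c+1) ε * (xg c)⁻¹) := by rw [← eTexp2 ε]
        _ = ((xg (c+1))⁻¹ * sgl c ε) * (tE (c+1) ε * (xg c)⁻¹) := by group
        _ = (sgl c ε * sgl (c+1) ε * (xg c)⁻¹) * (tE (c+1) ε * (xg c)⁻¹) := by
            rw [eXiS_eq ε]
        _ = sgl c ε * sgl (c+1) ε * ((xg c)⁻¹ * tE (c+1) ε) * (xg c)⁻¹ := by group
        _ = sgl c ε * sgl (c+1) ε * (tE (c+2) ε * (xg c)⁻¹) * (xg c)⁻¹ := by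
            rw [eXiT_ge (by omega) ε]
        _ = evalS [(c, ε), (c+1, ε)] * tE (c+2) ε * evalS [] * (evalX [c, c])⁻¹ := by
            simp [mul_inv_rev]; group
    · -- c + 1 < j : expand and recurse
      obtain ⟨A', c', B', vt', h2⟩ := ih (c+1) j ε (by omega)
      refine ⟨(c, ε) :: A', c', B', c :: vt', ?_⟩
      calc (xg j)⁻¹ * tE c ε
          = (xg j)⁻¹ * (sgl c ε * tE (c+1) ε * (xg c)⁻¹) := by rw [← eTexp2 ε]
        _ = ((xg j)⁻¹ * sgl c ε) * tE (c+1) ε * (xg c)⁻¹ := by group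
        _ = (sgl c ε * (xg j)⁻¹) * tE (c+1) ε * (xg c)⁻¹ := by rw [eXiS_lt hlt ε]
        _ = sgl c ε * ((xg j)⁻¹ * tE (c+1) ε) * (xg c)⁻¹ := by group
        _ = sgl c ε * (evalS A' * tE c' ε * evalS B' * (evalX vt')⁻¹) * (xg c)⁻¹ := by
            rw [h2]
        _ = evalS ((c, ε) :: A') * tE c' ε * evalS B' * (evalX (c :: vt'))⁻¹ := by
            simp [mul_inv_rev]; group

/-- passing a signed τ left through the inverse of a positive word -/
lemma tpass : ∀ (n : ℕ) (v : List ℕ), v.length ≤ n → ∀ (c : ℕ) (ε : Bool),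
    ∃ (A : List (ℕ × Bool)) (c' : ℕ) (B : List (ℕ × Bool)) (v' : List ℕ),
      (evalX v)⁻¹ * tE c ε = evalS A * tE c' ε * evalS B * (evalX v')⁻¹ := by
  intro n
  induction n with
  | zero =>
    intro v hv c ε
    rw [Nat.le_zero, List.length_eq_zero_iff] at hv
    subst hv
    exact ⟨[], c, [], [], by simp⟩
  | succ n ih =>
    intro v hv c ε
    rcases v with _ | ⟨j, v₀⟩
    · exact ⟨[], c, [], [], by simp⟩
    · obtain ⟨A₀, c₀, B₀, vt, h0⟩ := lxt j c j ε (by omega)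
      obtain ⟨A₁, v₁, hlen1, h1⟩ := pushT v₀ A₀
      obtain ⟨A₂, c₂, B₂, v₂, h2⟩ := ih v₁ (by simp at hv ⊢; omega) c₀ ε
      obtain ⟨B₃, v₃, _, h3⟩ := pushT v₂ B₀
      refine ⟨A₁ ++ A₂, c₂, B₂ ++ B₃, vt ++ v₃, ?_⟩
      calc (evalX (j :: v₀))⁻¹ * tE c ε
          = (evalX v₀)⁻¹ * ((xg j)⁻¹ * tE c ε) := by simp [mul_inv_rev]; group
        _ = (evalX v₀)⁻¹ * (evalS A₀ * tE c₀ ε * evalS B₀ * (evalX vt)⁻¹) := by rw [h0]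
        _ = ((evalX v₀)⁻¹ * evalS A₀) * (tE c₀ ε * (evalS B₀ * (evalX vt)⁻¹)) := by group
        _ = (evalS A₁ * (evalX v₁)⁻¹) * (tE c₀ ε * (evalS B₀ * (evalX vt)⁻¹)) := by rw [h1]
        _ = evalS A₁ * (((evalX v₁)⁻¹ * tE c₀ ε) * (evalS B₀ * (evalX vt)⁻¹)) := by group
        _ = evalS A₁ * ((evalS A₂ * tE c₂ ε * evalS B₂ * (evalX v₂)⁻¹) *
              (evalS B₀ * (evalX vt)⁻¹)) := by rw [h2]
        _ = evalS A₁ * (evalS A₂ * (tE c₂ ε * (evalS B₂ *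
              (((evalX v₂)⁻¹ * evalS B₀) * (evalX vt)⁻¹)))) := by group
        _ = evalS A₁ * (evalS A₂ * (tE c₂ ε * (evalS B₂ *
              ((evalS B₃ * (evalX v₃)⁻¹) * (evalX vt)⁻¹)))) := by rw [h3]
        _ = evalS (A₁ ++ A₂) * tE c₂ ε * evalS (B₂ ++ B₃) * (evalX (vt ++ v₃))⁻¹ := by
            simp [mul_inv_rev]; group

/-- appending a low signed τ to a level-ν word, producing junk on the right -/
lemma ap2 : ∀ (e ν : ℕ) (w : List (BVGen × Bool)) (c : ℕ) (ε : Bool), Lev ν w → c ≤ ν →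
    ν - c ≤ e → ∃ (w' : List (BVGen × Bool)) (v' : List ℕ), Lev ν w' ∧
      evalW w * tE c ε = evalW w' * (evalX v')⁻¹ := by
  intro e
  induction e with
  | zero =>
    intro ν w c ε hw hc he
    have : c = ν := by omega
    subst this
    exact ⟨w ++ [(BVGen.t c, ε)], [], Lev_append hw Lev_t, by simp⟩
  | succ e ih =>
    intro ν w c ε hw hc he
    rcases (show c = ν ∨ c < ν by omega) with rfl | hlt
    · exact ⟨w ++ [(BVGen.t c, ε)], [], Lev_append hw Lev_t, by simp⟩
    · obtain ⟨w', v'', hL, h1⟩ := ih ν (w ++ [(BVGen.s c, ε)]) (c+1) ε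
        (Lev_append hw (Lev_s hlt)) (by omega) (by omega)
      refine ⟨w', c :: v'', hL, ?_⟩
      calc evalW w * tE c ε
          = evalW w * (sgl c ε * tE (c+1) ε * (xg c)⁻¹) := by rw [← eTexp2 ε]
        _ = (evalW (w ++ [(BVGen.s c, ε)]) * tE (c+1) ε) * (xg c)⁻¹ := by
            simp; group
        _ = (evalW w' * (evalX v'')⁻¹) * (xg c)⁻¹ := by rw [h1]
        _ = evalW w' * (evalX (c :: v''))⁻¹ := by simp [mul_inv_rev]; group

/-- appending a σ-word on the right of a leveled word, raising as necessary -/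
lemma foldS : ∀ (C : List (ℕ × Bool)) (ν : ℕ) (w : List (BVGen × Bool)) (U : List ℕ),
    Lev ν w → Nval U + 1 ≤ ν + 2 →
    ∃ (U' : List ℕ) (ν' : ℕ) (w' : List (BVGen × Bool)), ν ≤ ν' ∧ Lev ν' w' ∧
      Nval U' + 1 ≤ ν' + 2 ∧ evalX U * evalW w * evalS C = evalX U' * evalW w' := by
  intro C
  induction C with
  | nil => intro ν w U hw hU; exact ⟨U, ν, w, le_rfl, hw, hU, by simp⟩
  | cons p C ih =>
    intro ν w U hw hU
    obtain ⟨a, ε⟩ := p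
    obtain ⟨U₁, w₁, hL1, hU1, h1⟩ := raiseStar (max ν (a+1) - ν) ν w U hw hU
    have hm : ν + (max ν (a+1) - ν) = max ν (a+1) := by omega
    rw [hm] at hL1 hU1
    have ha : a < max ν (a+1) := by omega
    obtain ⟨U', ν', w', hνν', hL', hU', h2⟩ := ih (max ν (a+1)) (w₁ ++ [(BVGen.s a, ε)]) U₁
      (Lev_append hL1 (Lev_s ha)) hU1
    refine ⟨U', ν', w', le_trans (le_max_left _ _) hνν', hL', hU', ?_⟩
    calc evalX U * evalW w * evalS ((a, ε) :: C)
        = (evalX U * evalW w) * (sgl a ε * evalS C) := by simp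
      _ = (evalX U₁ * evalW w₁) * (sgl a ε * evalS C) := by rw [h1]
      _ = (evalX U₁ * evalW (w₁ ++ [(BVGen.s a, ε)])) * evalS C := by simp; group
      _ = evalX U' * evalW w' := h2
end GBV
namespace GBV
open BVGen List

@[simp] lemma letE_x_t (j : ℕ) : letE (BVGen.x j) true = xg j := rfl
@[simp] lemma letE_x_f (j : ℕ) : letE (BVGen.x j) false = (xg j)⁻¹ := rfl

/-- the representation predicate: `g = X U · W w · (X V)⁻¹` with `w` of level `ν`
and the `U`-side tight. -/
def Rep (g : GBV) : Prop :=
  ∃ (U : List ℕ) (w : List (BVGen × Bool)) (ν : ℕ) (V : List ℕ),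
    Lev ν w ∧ Nval U + 1 ≤ ν + 2 ∧ g = evalX U * evalW w * (evalX V)⁻¹

lemma rep_one : Rep 1 :=
  ⟨[], [], 0, [], Lev_nil 0, by simp, by simp⟩

lemma rep_mul_letter {g : GBV} (hg : Rep g) (p : BVGen) (ε : Bool) :
    Rep (g * letE p ε) := by
  obtain ⟨U, w, ν, V, hw, hU, rfl⟩ := hg
  cases p with
  | x j =>
    cases ε with
    | false =>
      refine ⟨U, w, ν, j :: V, hw, hU, ?_⟩
      simp [mul_inv_rev, mul_assoc]
    | true =>
      obtain ⟨V', o, hs⟩ := snp V j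
      have hVj : (evalX V)⁻¹ * xg j = xO o * (evalX V')⁻¹ := by
        have := congrArg (·⁻¹) hs
        simp only [mul_inv_rev, inv_inv] at this
        simpa using this
      cases o with
      | none =>
        refine ⟨U, w, ν, V', hw, hU, ?_⟩
        simp only [letE_x_t, mul_assoc, hVj, xO_none, one_mul]
      | some k =>
        obtain ⟨U₁, w₁, hL1, hU1, h1⟩ := raiseStar (max ν k - ν) ν w U hw hU
        have hm : ν + (max ν k - ν) = max ν k := by omega
        rw [hm] at hL1 hU1
        obtain ⟨o₂, w₂, ho₂, hL₂, hmv⟩ := moveL hL1 (le_max_right ν k)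
        refine ⟨U₁ ++ o₂.toList, w₂, max ν k + 1, V', hL₂, by have := NB hU1 ho₂; omega, ?_⟩
        calc evalX U * evalW w * (evalX V)⁻¹ * letE (BVGen.x j) true
            = (evalX U * evalW w) * ((evalX V)⁻¹ * xg j) := by simp [mul_assoc]
          _ = (evalX U₁ * evalW w₁) * (xg k * (evalX V')⁻¹) := by rw [h1, hVj]; simp
          _ = evalX U₁ * (evalW w₁ * xg k) * (evalX V')⁻¹ := by group
          _ = evalX U₁ * (xO o₂ * evalW w₂) * (evalX V')⁻¹ := by rw [hmv]
          _ = evalX (U₁ ++ o₂.toList) * evalW w₂ * (evalX V')⁻¹ := by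
              simp [evalX_append]; group
  | s a =>
    obtain ⟨C, V', _, hp⟩ := pushT V [(a, ε)]
    obtain ⟨U', ν', w', hνν', hL', hU', h2⟩ := foldS C ν w U hw hU
    refine ⟨U', w', ν', V', hL', hU', ?_⟩
    calc evalX U * evalW w * (evalX V)⁻¹ * letE (BVGen.s a) ε
        = (evalX U * evalW w) * ((evalX V)⁻¹ * evalS [(a, ε)]) := by simp [mul_assoc]
      _ = (evalX U * evalW w) * (evalS C * (evalX V')⁻¹) := by rw [hp]
      _ = (evalX U * evalW w * evalS C) * (evalX V')⁻¹ := by group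
      _ = evalX U' * evalW w' * (evalX V')⁻¹ := by rw [h2]
  | t c =>
    obtain ⟨A, c₂, B, V₁, hp⟩ := tpass V.length V le_rfl c ε
    obtain ⟨U₁, ν₁, w₁, hν1, hL1, hU1, h1⟩ := foldS A ν w U hw hU
    obtain ⟨U₂, w₂, hL2, hU2, h2⟩ := raiseStar (max ν₁ c₂ - ν₁) ν₁ w₁ U₁ hL1 hU1
    have hm : ν₁ + (max ν₁ c₂ - ν₁) = max ν₁ c₂ := by omega
    rw [hm] at hL2 hU2
    obtain ⟨w₃, J, hL3, h3⟩ := ap2 (max ν₁ c₂) (max ν₁ c₂) w₂ c₂ ε hL2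
      (le_max_right _ _) (by omega)
    obtain ⟨C₂, J₂, _, h4⟩ := pushT J B
    obtain ⟨U₃, ν₃, w₃', hν3, hL3', hU3, h5⟩ := foldS C₂ (max ν₁ c₂) w₃ U₂ hL3 hU2
    refine ⟨U₃, w₃', ν₃, V₁ ++ J₂, hL3', hU3, ?_⟩
    calc evalX U * evalW w * (evalX V)⁻¹ * letE (BVGen.t c) ε
        = (evalX U * evalW w) * ((evalX V)⁻¹ * tE c ε) := by simp [mul_assoc]
      _ = (evalX U * evalW w) * (evalS A * tE c₂ ε * evalS B * (evalX V₁)⁻¹) := by rw [hp]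
      _ = (evalX U * evalW w * evalS A) * (tE c₂ ε * (evalS B * (evalX V₁)⁻¹)) := by group
      _ = (evalX U₁ * evalW w₁) * (tE c₂ ε * (evalS B * (evalX V₁)⁻¹)) := by rw [h1]
      _ = (evalX U₂ * evalW w₂) * (tE c₂ ε * (evalS B * (evalX V₁)⁻¹)) := by rw [h2]
      _ = evalX U₂ * ((evalW w₂ * tE c₂ ε) * (evalS B * (evalX V₁)⁻¹)) := by group
      _ = evalX U₂ * ((evalW w₃ * (evalX J)⁻¹) * (evalS B * (evalX V₁)⁻¹)) := by rw [h3]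
      _ = evalX U₂ * (evalW w₃ * (((evalX J)⁻¹ * evalS B) * (evalX V₁)⁻¹)) := by group
      _ = evalX U₂ * (evalW w₃ * ((evalS C₂ * (evalX J₂)⁻¹) * (evalX V₁)⁻¹)) := by rw [h4]
      _ = (evalX U₂ * evalW w₃ * evalS C₂) * ((evalX J₂)⁻¹ * (evalX V₁)⁻¹) := by group
      _ = (evalX U₃ * evalW w₃') * ((evalX J₂)⁻¹ * (evalX V₁)⁻¹) := by rw [h5]
      _ = evalX U₃ * evalW w₃' * (evalX (V₁ ++ J₂))⁻¹ := by
          simp [mul_inv_rev, mul_assoc]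

lemma rep_word : ∀ (L : List (BVGen × Bool)), Rep (φ (FreeGroup.mk L)) := by
  intro L
  induction L using List.reverseRecOn with
  | nil =>
    rw [← FreeGroup.one_eq_mk, map_one]
    exact rep_one
  | append_singleton L p ih =>
    obtain ⟨a, ε⟩ := p
    have : FreeGroup.mk (L ++ [(a, ε)]) = FreeGroup.mk L * FreeGroup.mk [(a, ε)] :=
      (FreeGroup.mul_mk).symm
    rw [this, map_mul]
    have hlet : φ (FreeGroup.mk [(a, ε)]) = letE a ε := by
      cases ε with
      | true => rfl
      | false =>
        have : FreeGroup.mk [(a, false)] = (FreeGroup.of a)⁻¹ := by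
          rw [show (FreeGroup.of a : FreeGroup BVGen) = FreeGroup.mk [(a, true)] from rfl,
            FreeGroup.inv_mk]
          rfl
        rw [this, map_inv]
        rfl
    rw [hlet]
    exact rep_mul_letter ih a ε

lemma rep_all (g : GBV) : Rep g := by
  classical
  obtain ⟨f, rfl⟩ := PresentedGroup.mk_surjective bvRels g
  have : f = FreeGroup.mk f.toWord := (FreeGroup.mk_toWord).symm
  rw [this]
  exact rep_word f.toWord

lemma Lev_BnGen {ν : ℕ} {w : List (BVGen × Bool)} (h : Lev ν w) :
    ∀ p ∈ w, p.1 ∈ BnGen (ν + 2) := by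
  intro p hp
  rcases h p hp with ⟨a, ha, hg⟩ | hg
  · exact Or.inl ⟨a + 1, by omega, by omega, by simp [hg]⟩
  · exact Or.inr ⟨by omega, by simp [hg]⟩

end GBV

/-- Every element of `BV` is represented by a block. -/
theorem bv_block_surjective (g : GBV) : ∃ b : GBV.Block, b.eval = g := by
  obtain ⟨U, w, ν, V, hw, hU, rfl⟩ := GBV.rep_all g
  obtain ⟨U₁, w₁, hL1, hU1, h1⟩ :=
    GBV.raiseStar (max ν (GBV.Nval V) - ν) ν w U hw hU
  have hm : ν + (max ν (GBV.Nval V) - ν) = max ν (GBV.Nval V) := by omega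
  rw [hm] at hL1 hU1
  refine ⟨⟨GBV.sortX U₁, w₁, GBV.sortX V, max ν (GBV.Nval V) + 2,
    GBV.sortX_sorted U₁, GBV.sortX_sorted V, GBV.Lev_BnGen hL1, ?_⟩, ?_⟩
  · rw [GBV.sortX_Nval, GBV.sortX_Nval]
    have h2 : GBV.Nval V ≤ max ν (GBV.Nval V) := le_max_right _ _
    omega
  · show GBV.evalX (GBV.sortX U₁) * GBV.evalW w₁ * (GBV.evalX (GBV.sortX V))⁻¹ = _
    rw [GBV.sortX_eval, GBV.sortX_eval, ← h1]
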